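/- Let {M_t} be a Hilbert-space-valued martingale with increments bounded by B almost surely. For R ≥ R' ≥ 0, let p be the probability that ‖M_t‖ ≥ ‖M_0‖ + R occurs before ‖M_t‖ ≤ ‖M_0‖ − R'. Then p ≥ R'/(2R + B), provided one of the two events occurs almost surely. -/

import Mathlib

open MeasureTheory Filter Topology
open scoped ENNReal

section LemA

variable {α H : Type*} {m m0 : MeasurableSpace α} {μ : Measure α}
  [NormedAddCommGroup H] [InnerProductSpace ℝ H] [CompleteSpace H]

theorem inner_condexp_ae_eq (hm : m ≤ m0) [SigmaFinite (μ.trim hm)]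
    {f : α → H} (hf : Integrable f μ) (u : H) :
    (fun x => (inner ℝ u ((μ[f|m]) x) : ℝ)) =ᵐ[μ] μ[fun y => (inner ℝ u (f y) : ℝ)|m] := by
  refine ae_eq_condExp_of_forall_setIntegral_eq hm
    ((innerSL ℝ u).integrable_comp hf) (fun s hs hμs =>
      ((innerSL ℝ u).integrable_comp integrable_condExp).integrableOn) ?_ ?_
  · intro s hs hμs
    simp_rw [← innerSL_apply_apply (𝕜 := ℝ)]
    rw [ContinuousLinearMap.integral_comp_comm _ integrable_condExp.integrableOn,
      ContinuousLinearMap.integral_comp_comm _ hf.integrableOn,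
      setIntegral_condExp hm hf hs]
  · exact StronglyMeasurable.aestronglyMeasurable
      ((innerSL ℝ u).continuous.comp_stronglyMeasurable stronglyMeasurable_condExp)

theorem ae_norm_condexp_le' (hm : m ≤ m0) [SigmaFinite (μ.trim hm)]
    {f : α → H} (hf : Integrable f μ) :
    ∀ᵐ x ∂μ, ‖(μ[f|m]) x‖ ≤ (μ[fun y => ‖f y‖|m]) x := by
  set g := μ[f|m] with hg
  set c := μ[fun y => ‖f y‖|m] with hc
  obtain ⟨D, hDcount, hDdense⟩ :=
    (stronglyMeasurable_condExp (f := f) (m := m)).isSeparable_range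
  have h0 : ∀ᵐ x ∂μ, 0 ≤ c x :=
    condExp_nonneg (Eventually.of_forall fun y => norm_nonneg _)
  have hD : ∀ᵐ x ∂μ, ∀ d ∈ D, (inner ℝ d (g x) : ℝ) ≤ ‖d‖ * c x := by
    rw [ae_ball_iff hDcount]
    intro d hd
    have h1 : (fun x => (inner ℝ d (g x) : ℝ)) =ᵐ[μ] μ[fun y => (inner ℝ d (f y) : ℝ)|m] :=
      inner_condexp_ae_eq hm hf d
    have h2 : μ[fun y => (inner ℝ d (f y) : ℝ)|m] ≤ᵐ[μ] μ[fun y => ‖d‖ * ‖f y‖|m] := by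
      refine condExp_mono ((innerSL ℝ d).integrable_comp hf)
        (hf.norm.const_mul _) (Eventually.of_forall fun y => ?_)
      exact (real_inner_le_norm d (f y))
    have h3 : μ[fun y => ‖d‖ * ‖f y‖|m] =ᵐ[μ] fun x => ‖d‖ * c x := by
      simpa [Pi.smul_def, smul_eq_mul] using condExp_smul (μ := μ) (m := m) (‖d‖) (fun y => ‖f y‖)
    filter_upwards [h1, h2, h3] with x h1 h2 h3
    rw [h1]; exact h2.trans h3.le
  filter_upwards [h0, hD] with x h0 hD
  have hgx : g x ∈ closure D := hDdense (Set.mem_range_self x)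
  rcases eq_or_lt_of_le (norm_nonneg (g x)) with hr | hr
  · exact le_trans hr.symm.le h0
  -- ‖g x‖ > 0
  have key : ∀ ε > (0:ℝ), ‖g x‖ ^ 2 ≤ ‖g x‖ * c x + ε * (c x + ‖g x‖) := by
    intro ε hε
    obtain ⟨d, hdD, hdist⟩ := Metric.mem_closure_iff.1 hgx ε hε
    have h1 : (inner ℝ d (g x) : ℝ) ≤ ‖d‖ * c x := hD d hdD
    have hdn : ‖d - g x‖ ≤ ε := by
      rw [norm_sub_rev, ← dist_eq_norm]; exact hdist.le
    have h2 : ‖g x‖ ^ 2 - ε * ‖g x‖ ≤ (inner ℝ d (g x) : ℝ) := by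
      have he : g x + (d - g x) = d := by abel
      have : (inner ℝ d (g x) : ℝ) = (inner ℝ (g x) (g x) : ℝ) + (inner ℝ (d - g x) (g x) : ℝ) := by
        rw [← inner_add_left, he]
      rw [this, real_inner_self_eq_norm_sq]
      have habs : |(inner ℝ (d - g x) (g x) : ℝ)| ≤ ε * ‖g x‖ := by
        refine (abs_real_inner_le_norm _ _).trans ?_
        exact mul_le_mul_of_nonneg_right hdn (norm_nonneg _)
      nlinarith [abs_le.1 habs]
    have h3 : ‖d‖ ≤ ‖g x‖ + ε := by
      have he : g x + (d - g x) = d := by abel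
      calc ‖d‖ = ‖g x + (d - g x)‖ := by rw [he]
        _ ≤ ‖g x‖ + ‖d - g x‖ := norm_add_le _ _
        _ ≤ ‖g x‖ + ε := by linarith
    nlinarith [h0]
  have hsq : ‖g x‖ ^ 2 ≤ ‖g x‖ * c x := by
    refine le_of_forall_pos_le_add fun ε hε => ?_
    have hpos : 0 < c x + ‖g x‖ := by linarith
    have := key (ε / (c x + ‖g x‖)) (by positivity)
    calc ‖g x‖ ^ 2 ≤ ‖g x‖ * c x + ε / (c x + ‖g x‖) * (c x + ‖g x‖) := this
      _ = ‖g x‖ * c x + ε := by field_simp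
  nlinarith

theorem Martingale.norm_submartingale {Ω : Type*} {m : MeasurableSpace Ω} {μ : Measure Ω}
    [IsFiniteMeasure μ] {ℱ : Filtration ℕ m} {M : ℕ → Ω → H} (hM : Martingale M ℱ μ) :
    Submartingale (fun t ω => ‖M t ω‖) ℱ μ := by
  refine ⟨fun i => (hM.stronglyAdapted i).norm, fun i j hij => ?_, fun i => (hM.integrable i).norm⟩
  filter_upwards [hM.2 i j hij, ae_norm_condexp_le' (ℱ.le i) (hM.integrable j)] with ω h1 h2
  calc ‖M i ω‖ = ‖(μ[M j|ℱ i]) ω‖ := by rw [h1]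
    _ ≤ (μ[fun y => ‖M j y‖|ℱ i]) ω := h2

end LemA

theorem nat_sInf_eq_iff (S : Set ℕ) (k : ℕ) :
    sInf S = k ↔ (k ∈ S ∧ ∀ j < k, j ∉ S) ∨ (k = 0 ∧ ∀ j, j ∉ S) := by
  constructor
  · rintro rfl
    by_cases h : S.Nonempty
    · exact Or.inl ⟨Nat.sInf_mem h, fun j hj => Nat.notMem_of_lt_sInf hj⟩
    · rw [Set.not_nonempty_iff_eq_empty] at h
      subst h
      exact Or.inr ⟨Nat.sInf_empty, fun j => id⟩
  · rintro (⟨hk, hmin⟩ | ⟨rfl, hall⟩)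
    · refine le_antisymm (Nat.sInf_le hk) ?_
      by_contra h
      push_neg at h
      exact hmin _ h (Nat.sInf_mem ⟨k, hk⟩)
    · rw [Set.eq_empty_iff_forall_notMem.2 hall, Nat.sInf_empty]

theorem stmt12 {Ω : Type*} {m : MeasurableSpace Ω} {μ : Measure Ω} [IsProbabilityMeasure μ]
    (ℱ : Filtration ℕ m)
    {H : Type*} [NormedAddCommGroup H] [InnerProductSpace ℝ H] [CompleteSpace H]
    (M : ℕ → Ω → H) (hM : Martingale M ℱ μ)
    (B : ℝ) (hB : 0 < B)
    (hbdd : ∀ t : ℕ, ∀ᵐ ω ∂μ, ‖M (t + 1) ω - M t ω‖ ≤ B)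
    (R R' : ℝ) (hR' : 0 ≤ R') (hRR' : R' ≤ R)
    (hhit : ∀ᵐ ω ∂μ, ∃ t : ℕ,
      ‖M 0 ω‖ + R ≤ ‖M t ω‖ ∨ ‖M t ω‖ ≤ ‖M 0 ω‖ - R')
    (τ : Ω → ℕ)
    (hτ : ∀ ω, τ ω =
      sInf {t : ℕ | ‖M 0 ω‖ + R ≤ ‖M t ω‖ ∨ ‖M t ω‖ ≤ ‖M 0 ω‖ - R'}) :
    ENNReal.ofReal (R' / (2 * R + B))
      ≤ μ {ω | ‖M 0 ω‖ + R ≤ ‖M (τ ω) ω‖} := by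
  rcases eq_or_lt_of_le hR' with hR'0 | hR'0
  · simp [← hR'0]
  have hR0 : 0 < R := lt_of_lt_of_le hR'0 hRR'
  -- notation
  set P : ℕ → Ω → Prop := fun t ω => ‖M 0 ω‖ + R ≤ ‖M t ω‖ ∨ ‖M t ω‖ ≤ ‖M 0 ω‖ - R' with hP
  set g : ℕ → Ω → ℝ := fun t ω => ‖M t ω‖ with hgdef
  have hgmeas : ∀ t, Measurable (g t) :=
    fun t => ((hM.stronglyAdapted t).mono (ℱ.le t)).norm.measurable
  have hPmeas : ∀ t, MeasurableSet {ω | P t ω} := by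
    intro t
    exact ((measurableSet_le ((hgmeas 0).add_const R) (hgmeas t)).union
      (measurableSet_le (hgmeas t) ((hgmeas 0).sub_const R')))
  -- τ measurable
  have hτmeas : Measurable τ := by
    apply measurable_to_countable'
    intro k
    have hset : τ ⁻¹' {k} =
        ({ω | P k ω} ∩ ⋂ j, ⋂ _ : j < k, {ω | P j ω}ᶜ) ∪
          ({ω | k = 0} ∩ ⋂ j, {ω | P j ω}ᶜ) := by
      ext ω
      simp only [Set.mem_preimage, Set.mem_singleton_iff, hτ ω, nat_sInf_eq_iff,
        Set.mem_union, Set.mem_inter_iff, Set.mem_iInter, Set.mem_compl_iff,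
        Set.mem_setOf_eq]
      exact Iff.rfl
    rw [hset]
    refine ((hPmeas k).inter (MeasurableSet.iInter fun j =>
        MeasurableSet.iInter fun _ => (hPmeas j).compl)).union
      (MeasurableSet.inter ?_ (MeasurableSet.iInter fun j => (hPmeas j).compl))
    by_cases hk : k = 0 <;> simp [hk]
  -- the target set
  set A : Set Ω := {ω | ‖M 0 ω‖ + R ≤ ‖M (τ ω) ω‖} with hA
  have hfmeas : Measurable (fun ω => ‖M (τ ω) ω‖) := by
    have h1 : Measurable (fun p : Ω × ℕ => ‖M p.2 p.1‖) :=
      measurable_from_prod_countable_left fun t => (hgmeas t)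
    exact h1.comp (measurable_id.prodMk hτmeas)
  have hAmeas : MeasurableSet A :=
    measurableSet_le ((hgmeas 0).add_const R) hfmeas
  -- norm submartingale
  have hsub : Submartingale g ℱ μ := Martingale.norm_submartingale hM
  -- hitting time machinery
  set u : ℕ → Ω → ℝ := fun t ω => ‖M t ω‖ - ‖M 0 ω‖ with hu
  set s : Set ℝ := Set.Iic (-R') ∪ Set.Ici R with hs
  have hsmeas : MeasurableSet s := measurableSet_Iic.union measurableSet_Ici
  have husmem : ∀ t ω, u t ω ∈ s ↔ P t ω := by
    intro t ω
    simp only [hu, hs, Set.mem_union, Set.mem_Iic, Set.mem_Ici, hP, Set.mem_setOf_eq]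
    constructor
    · rintro (h | h)
      · exact Or.inr (by linarith)
      · exact Or.inl (by linarith)
    · rintro (h | h)
      · exact Or.inr (by linarith)
      · exact Or.inl (by linarith)
  have hadp : Adapted ℱ u := fun t =>
    ((hM.stronglyAdapted t).norm.sub (((hM.stronglyAdapted 0).mono (ℱ.mono (Nat.zero_le t))).norm)).measurable
  have hstopN : ∀ N : ℕ, IsStoppingTime ℱ (fun ω => (hittingBtwn u s 0 N ω : ℕ)) :=
    fun N => hadp.isStoppingTime_hittingBtwn hsmeas
  -- optional stopping
  have hOST : ∀ N : ℕ, ∫ ω, g 0 ω ∂μ ≤ ∫ ω, stoppedValue g (fun ω => (hittingBtwn u s 0 N ω : ℕ)) ω ∂μ := by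
    intro N
    have h := hsub.expected_stoppedValue_mono (isStoppingTime_const ℱ 0) (hstopN N)
      (fun ω => WithTop.coe_le_coe.2 (Nat.zero_le _)) (fun ω => WithTop.coe_le_coe.2 (hittingBtwn_le ω))
    rwa [stoppedValue_const] at h
  -- min facts about τ
  have hτ_min : ∀ ω, ∀ t, t < τ ω → ¬ P t ω := by
    intro ω t ht
    rw [hτ ω] at ht
    exact Nat.notMem_of_lt_sInf ht
  have hτ_mem : ∀ ω, (∃ t, P t ω) → P (τ ω) ω := by
    intro ω hne
    rw [hτ ω]
    exact Nat.sInf_mem hne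
  -- key pointwise bound
  have hkey : ∀ ω, (∀ t, ‖M (t+1) ω - M t ω‖ ≤ B) → ∀ t, t ≤ τ ω → g t ω ≤ g 0 ω + (R + B) := by
    intro ω hb t ht
    match t with
    | 0 => simp only [hgdef]; linarith
    | (n+1) =>
      have hn : ¬ P n ω := hτ_min ω n (lt_of_lt_of_le (Nat.lt_succ_self n) ht)
      simp only [hP, Set.mem_setOf_eq, not_or, not_le] at hn
      have h1 : ‖M (n+1) ω‖ ≤ ‖M n ω‖ + B := by
        have hb' := hb n
        have he : M n ω + (M (n+1) ω - M n ω) = M (n+1) ω := by abel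
        calc ‖M (n+1) ω‖ = ‖M n ω + (M (n+1) ω - M n ω)‖ := by rw [he]
          _ ≤ ‖M n ω‖ + ‖M (n+1) ω - M n ω‖ := norm_add_le _ _
          _ ≤ ‖M n ω‖ + B := by linarith
      simp only [hgdef]
      linarith [hn.1]
  -- identification of the hitting time
  have hident : ∀ ω, (∃ t, P t ω) → ∀ N : ℕ, hittingBtwn u s 0 N ω = min (τ ω) N := by
    intro ω hne N
    have hτS : P (τ ω) ω := hτ_mem ω hne
    rcases le_or_gt (τ ω) N with hle | hlt
    · rw [min_eq_left hle]
      refine le_antisymm (hittingBtwn_le_of_mem (Nat.zero_le _) hle ((husmem _ _).2 hτS)) ?_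
      by_contra hc
      push_neg at hc
      have hmem : u (hittingBtwn u s 0 N ω) ω ∈ s :=
        hittingBtwn_mem_set ⟨τ ω, ⟨Nat.zero_le _, hle⟩, (husmem _ _).2 hτS⟩
      have hlt' : hittingBtwn u s 0 N ω < sInf {t | P t ω} := by rw [← hτ ω]; exact hc
      exact Nat.notMem_of_lt_sInf hlt' ((husmem _ _).1 hmem)
    · rw [min_eq_right hlt.le]
      have hno : ¬∃ j ∈ Set.Icc 0 N, u j ω ∈ s := by
        rintro ⟨j, hj, hjs⟩
        have h1 : τ ω ≤ j := by
          rw [hτ ω]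
          exact Nat.sInf_le ((husmem _ _).1 hjs)
        exact absurd (h1.trans hj.2) (not_le.2 hlt)
      simp only [hittingBtwn, hno, if_false]
  -- good event
  have hgood : ∀ᵐ ω ∂μ, (∃ t, P t ω) ∧ ∀ t, ‖M (t+1) ω - M t ω‖ ≤ B :=
    hhit.and (ae_all_iff.2 hbdd)
  -- dominated convergence
  set h : Ω → ℝ := fun ω => g 0 ω + (R + B) with hh
  have h_int : Integrable h μ := (hM.integrable 0).norm.add (integrable_const _)
  set f : Ω → ℝ := fun ω => ‖M (τ ω) ω‖ with hf
  have hF_meas : ∀ N : ℕ, AEStronglyMeasurable (stoppedValue g (fun ω => (hittingBtwn u s 0 N ω : ℕ))) μ := by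
    intro N
    exact ((stronglyMeasurable_stoppedValue_of_le
      hsub.stronglyAdapted.progMeasurable_of_discrete (hstopN N)
      (fun ω => WithTop.coe_le_coe.2 (hittingBtwn_le ω))).mono (ℱ.le N)).aestronglyMeasurable
  have h_bound : ∀ N : ℕ, ∀ᵐ ω ∂μ, ‖stoppedValue g (fun ω => (hittingBtwn u s 0 N ω : ℕ)) ω‖ ≤ h ω := by
    intro N
    filter_upwards [hgood] with ω hω
    obtain ⟨hne, hb⟩ := hω
    rw [stoppedValue, hident ω hne N, Real.norm_eq_abs, abs_of_nonneg (norm_nonneg _)]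
    exact hkey ω hb _ (min_le_left _ _)
  have h_lim : ∀ᵐ ω ∂μ,
      Tendsto (fun N => stoppedValue g (fun ω => (hittingBtwn u s 0 N ω : ℕ)) ω) atTop (𝓝 (f ω)) := by
    filter_upwards [hgood] with ω hω
    refine tendsto_atTop_of_eventually_const (i₀ := τ ω) fun N hN => ?_
    rw [stoppedValue, hident ω hω.1 N, min_eq_left hN]
    rfl
  have hconv : Tendsto (fun N => ∫ ω, stoppedValue g (fun ω => (hittingBtwn u s 0 N ω : ℕ)) ω ∂μ) atTop
      (𝓝 (∫ ω, f ω ∂μ)) :=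
    tendsto_integral_of_dominated_convergence h hF_meas h_int h_bound h_lim
  have hle1 : ∫ ω, g 0 ω ∂μ ≤ ∫ ω, f ω ∂μ := ge_of_tendsto' hconv hOST
  -- integrability of f
  have hf_int : Integrable f μ := by
    refine h_int.mono hfmeas.aestronglyMeasurable ?_
    filter_upwards [hgood] with ω hω
    rw [Real.norm_eq_abs, abs_of_nonneg (norm_nonneg _)]
    exact (hkey ω hω.2 _ le_rfl).trans (le_abs_self _)
  -- pointwise upper bound at τ
  have hpoint : ∀ᵐ ω ∂μ,
      f ω ≤ A.indicator h ω + Aᶜ.indicator (fun ω => g 0 ω - R') ω := by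
    filter_upwards [hgood] with ω hω
    obtain ⟨hne, hb⟩ := hω
    by_cases hωA : ω ∈ A
    · rw [Set.indicator_of_mem hωA, Set.indicator_of_notMem (by simpa using hωA), add_zero]
      exact hkey ω hb _ le_rfl
    · rw [Set.indicator_of_notMem hωA, Set.indicator_of_mem (Set.mem_compl hωA), zero_add]
      rcases hτ_mem ω hne with hc | hc
      · exact absurd hc hωA
      · exact hc
  have hi1 : Integrable (A.indicator h) μ := h_int.indicator hAmeas
  have hi2 : Integrable (Aᶜ.indicator (fun ω => g 0 ω - R')) μ :=
    ((hM.integrable 0).norm.sub (integrable_const _)).indicator hAmeas.compl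
  have hle2 : ∫ ω, f ω ∂μ ≤
      ∫ ω, A.indicator h ω ∂μ + ∫ ω, Aᶜ.indicator (fun ω => g 0 ω - R') ω ∂μ := by
    calc ∫ ω, f ω ∂μ ≤ ∫ ω, (A.indicator h ω + Aᶜ.indicator (fun ω => g 0 ω - R') ω) ∂μ :=
          integral_mono_ae hf_int (hi1.add hi2) hpoint
      _ = _ := integral_add hi1 hi2
  -- compute the two integrals
  set p := (μ A).toReal with hp
  set q := (μ Aᶜ).toReal with hq
  have hpq : p + q = 1 := by
    rw [hp, hq, ← ENNReal.toReal_add (measure_ne_top μ A) (measure_ne_top μ Aᶜ),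
      measure_add_measure_compl hAmeas]
    simp
  have hI1 : ∫ ω, A.indicator h ω ∂μ = (∫ ω in A, g 0 ω ∂μ) + p * (R + B) := by
    rw [integral_indicator hAmeas]
    rw [hh]
    rw [integral_add ((hM.integrable 0).norm.integrableOn) (integrable_const _).integrableOn]
    rw [setIntegral_const]
    simp [hp, smul_eq_mul, Measure.real]
    rfl
  have hI2 : ∫ ω, Aᶜ.indicator (fun ω => g 0 ω - R') ω ∂μ
      = (∫ ω in Aᶜ, g 0 ω ∂μ) - q * R' := by
    rw [integral_indicator hAmeas.compl]
    rw [integral_sub ((hM.integrable 0).norm.integrableOn) (integrable_const _).integrableOn]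
    rw [setIntegral_const]
    simp [hq, smul_eq_mul, Measure.real]
    rfl
  have hsplit : (∫ ω in A, g 0 ω ∂μ) + (∫ ω in Aᶜ, g 0 ω ∂μ) = ∫ ω, g 0 ω ∂μ :=
    integral_add_compl hAmeas (hM.integrable 0).norm
  -- final arithmetic
  have hp0 : 0 ≤ p := ENNReal.toReal_nonneg
  have h2RB : 0 < 2 * R + B := by linarith
  have hfinal : R' / (2 * R + B) ≤ p := by
    rw [div_le_iff₀ h2RB]
    nlinarith [hle1.trans hle2, hI1, hI2, hsplit, hpq]
  calc ENNReal.ofReal (R' / (2 * R + B)) ≤ ENNReal.ofReal p :=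
        ENNReal.ofReal_le_ofReal hfinal
    _ = μ A := by rw [hp, ENNReal.ofReal_toReal (measure_ne_top μ A)]
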